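/- arXiv:1809.05706 — 3 statements merged into one kernel-verified Lean document; each statement's English description precedes it below -/
import Mathlib

section
/- Let X ∈ {0,1}, V a random vector, q : 𝒱 → ℝ^K with E[‖q(V)‖²] < ∞, and w(X,V) = ((1,X)' ⊗ q(V)) ∈ ℝ^{2K}. If there is a set 𝒱̃ such that E[1(V ∈ 𝒱̃)q(V)q(V)'] is positive definite and 0 < P(v) < 1 for all v ∈ 𝒱̃, where P(v) = Pr(X = 1 | V = v), then E[w(X,V)w(X,V)'] is positive definite. -/
open MeasureTheory ProbabilityTheory Matrix


lemma quad_single {n : Type*} [Fintype n] [DecidableEq n] (M : Matrix n n ℝ) (k : n) :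
    Pi.single k (1:ℝ) ⬝ᵥ (M *ᵥ Pi.single k 1) = M k k := by
  simp [dotProduct, mulVec, Pi.single_apply, ite_mul, mul_ite, Finset.sum_ite_eq,
    Finset.sum_ite_eq']

lemma quad_form {Ω ι : Type*} [MeasurableSpace Ω] [Fintype ι] (μ : Measure Ω)
    (u : ι → Ω → ℝ) (x : ι → ℝ) (hint : ∀ a b, Integrable (fun ω => u a ω * u b ω) μ) :
    x ⬝ᵥ ((Matrix.of fun a b => ∫ ω, u a ω * u b ω ∂μ) *ᵥ x) = ∫ ω, (∑ a, x a * u a ω)^2 ∂μ := by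
  have hexp : ∀ ω : Ω, (∑ a, x a * u a ω)^2 = ∑ a, ∑ b, x a * ((u a ω * u b ω) * x b) := by
    intro ω
    rw [sq, Finset.sum_mul_sum]
    exact Finset.sum_congr rfl fun a _ => Finset.sum_congr rfl fun b _ => by ring
  simp_rw [hexp]
  rw [integral_finset_sum _ fun a _ =>
    integrable_finset_sum _ fun b _ => ((hint a b).mul_const _).const_mul _]
  simp only [dotProduct, mulVec, of_apply]
  refine Finset.sum_congr rfl fun a _ => ?_
  rw [integral_finset_sum _ fun b _ => ((hint a b).mul_const _).const_mul _, Finset.mul_sum]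
  refine Finset.sum_congr rfl fun b _ => ?_
  rw [integral_const_mul, integral_mul_const]

/-- binary treatment — positive definiteness of E[w(X,V)w(X,V)'] for
w(X,V) = ((1,X)' ⊗ q(V)) under a propensity score condition on a set 𝒱̃. -/
theorem stmt8 {Ω 𝒱 : Type*} [MeasurableSpace Ω] [MeasurableSpace 𝒱]
    (μ : Measure Ω) [IsProbabilityMeasure μ] {K : ℕ}
    (X : Ω → ℝ) (V : Ω → 𝒱) (hX : Measurable X) (hV : Measurable V)
    (hbin : ∀ ω, X ω = 0 ∨ X ω = 1)
    (q : 𝒱 → Fin K → ℝ) (hq : ∀ k, Measurable fun v => q v k)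
    (hq2 : Integrable (fun ω => ∑ k, (q (V ω) k) ^ 2) μ)
    (κ : Kernel 𝒱 ℝ) [IsMarkovKernel κ]
    (hdis : μ.map (fun ω => (V ω, X ω)) = (μ.map V) ⊗ₘ κ)
    (S : Set 𝒱)
    (hPD : (Matrix.of fun k l =>
        ∫ ω, S.indicator (fun _ => (1 : ℝ)) (V ω) * (q (V ω) k * q (V ω) l) ∂μ).PosDef)
    (hP : ∀ v ∈ S, 0 < (κ v {1}).toReal ∧ (κ v {1}).toReal < 1) :
    (Matrix.of fun a b : Fin 2 × Fin K =>
      ∫ ω, ((if a.1 = 0 then 1 else X ω) * q (V ω) a.2)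
        * ((if b.1 = 0 then 1 else X ω) * q (V ω) b.2) ∂μ).PosDef := by
  classical
  set ν : Measure 𝒱 := μ.map V with hν
  set P : 𝒱 → ℝ := fun v => (κ v {1}).toReal with hPdef
  have hX01 : ∀ ω, 0 ≤ X ω ∧ X ω ≤ 1 := fun ω => by rcases hbin ω with h | h <;> simp [h]
  have hQmeas : ∀ k, Measurable fun ω => q (V ω) k := fun k => (hq k).comp hV
  have hBnn : ∀ ω, 0 ≤ ∑ k, (q (V ω) k) ^ 2 :=
    fun ω => Finset.sum_nonneg fun _ _ => sq_nonneg _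
  have hsq_le : ∀ k ω, (q (V ω) k) ^ 2 ≤ ∑ j, (q (V ω) j) ^ 2 :=
    fun k ω => Finset.single_le_sum (f := fun j => (q (V ω) j)^2) (fun j _ => sq_nonneg _) (Finset.mem_univ k)
  have habsB : ∀ k l ω, |q (V ω) k * q (V ω) l| ≤ ∑ j, (q (V ω) j) ^ 2 := by
    intro k l ω
    have h1 := hsq_le k ω; have h2 := hsq_le l ω
    refine abs_le.mpr ⟨?_, ?_⟩ <;>
      nlinarith [sq_nonneg (q (V ω) k + q (V ω) l), sq_nonneg (q (V ω) k - q (V ω) l)]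
  have hQQ : ∀ k l, Integrable (fun ω => q (V ω) k * q (V ω) l) μ := by
    intro k l
    exact Integrable.mono' hq2 (((hQmeas k).mul (hQmeas l)).aestronglyMeasurable)
      (Filter.Eventually.of_forall fun ω => by
        rw [Real.norm_eq_abs]; exact habsB k l ω)
  have hlin_meas : ∀ d : Fin K → ℝ, Measurable fun v => ∑ k, d k * q v k :=
    fun d => Finset.measurable_sum _ fun k _ => measurable_const.mul (hq k)
  have hlinV_meas : ∀ d : Fin K → ℝ, Measurable fun ω => ∑ k, d k * q (V ω) k :=
    fun d => (hlin_meas d).comp hV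
  have hsum_expand : ∀ (d : Fin K → ℝ) (v : 𝒱),
      (∑ k, d k * q v k) ^ 2 = ∑ k, ∑ l, (d k * d l) * (q v k * q v l) := by
    intro d v
    rw [sq, Finset.sum_mul_sum]
    exact Finset.sum_congr rfl fun a _ => Finset.sum_congr rfl fun b _ => by ring
  have hlin_sq_int : ∀ d : Fin K → ℝ, Integrable (fun ω => (∑ k, d k * q (V ω) k) ^ 2) μ := by
    intro d
    have : (fun ω => (∑ k, d k * q (V ω) k) ^ 2)
        = fun ω => ∑ k, ∑ l, (d k * d l) * (q (V ω) k * q (V ω) l) :=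
      funext fun ω => hsum_expand d (V ω)
    rw [this]
    exact integrable_finset_sum _ fun k _ =>
      integrable_finset_sum _ fun l _ => (hQQ k l).const_mul _
  have hlin_sq_int_ν : ∀ d : Fin K → ℝ, Integrable (fun v => (∑ k, d k * q v k) ^ 2) ν := by
    intro d
    rw [hν]
    refine (integrable_map_measure ((hlin_meas d).pow_const 2).aestronglyMeasurable
      hV.aemeasurable).mpr ?_
    exact hlin_sq_int d
  have hP01 : ∀ v, 0 ≤ P v ∧ P v ≤ 1 := by
    intro v
    refine ⟨ENNReal.toReal_nonneg, ?_⟩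
    have h1 : κ v {1} ≤ 1 := prob_le_one
    simpa using ENNReal.toReal_mono ENNReal.one_ne_top h1
  have hPmeas : Measurable P := (Kernel.measurable_coe κ (measurableSet_singleton 1)).ennreal_toReal
  -- key lemma: contradiction machine
  have key : ∀ d : Fin K → ℝ, d ≠ 0 →
      (∀ᵐ v ∂ν, v ∈ S → (∑ k, d k * q v k) = 0) → False := by
    intro d hd hae0
    set I : Ω → ℝ := fun ω => S.indicator (fun _ => (1 : ℝ)) (V ω) with hIdef
    have hI01 : ∀ ω, I ω = 0 ∨ I ω = 1 := by
      intro ω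
      by_cases h : V ω ∈ S
      · right; simp [hIdef, Set.indicator_of_mem h]
      · left; simp [hIdef, Set.indicator_of_notMem h]
    have hdiag : ∀ k, Integrable (fun ω => I ω * (q (V ω) k * q (V ω) k)) μ := by
      intro k
      by_contra hni
      have h0 : ∫ ω, I ω * (q (V ω) k * q (V ω) k) ∂μ = 0 := integral_undef hni
      have hpos := (posDef_iff_dotProduct_mulVec.mp hPD).2 (x := Pi.single k 1) (by
        intro hcon
        have := congrFun hcon k
        simp [Pi.single_apply] at this)
      rw [star_trivial, quad_single] at hpos
      simp only [of_apply] at hpos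
      rw [h0] at hpos
      exact lt_irrefl 0 hpos
    have hoff : ∀ k l, Integrable (fun ω => I ω * (q (V ω) k * q (V ω) l)) μ := by
      intro k l
      have hmeas : AEStronglyMeasurable (fun ω => I ω * (q (V ω) k * q (V ω) l)) μ := by
        have heq : (fun ω => I ω * (q (V ω) k * q (V ω) l))
            = fun ω => (I ω * (q (V ω) k * q (V ω) k))
              * (q (V ω) l * (if q (V ω) k = 0 then 0 else (q (V ω) k)⁻¹)) := by
          funext ω
          by_cases h : q (V ω) k = 0
          · simp [h]
          · rw [if_neg h]; field_simp
        rw [heq]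
        exact (hdiag k).aestronglyMeasurable.mul
          (((hQmeas l).mul (Measurable.ite ((hQmeas k) (measurableSet_singleton 0))
            measurable_const (hQmeas k).inv)).aestronglyMeasurable)
      refine Integrable.mono' ((hdiag k).add (hdiag l)) hmeas
        (Filter.Eventually.of_forall fun ω => ?_)
      rw [Real.norm_eq_abs]
      simp only [Pi.add_apply]
      rcases hI01 ω with h | h
      · simp [h]
      · rw [h, one_mul, one_mul, one_mul]
        refine abs_le.mpr ⟨?_, ?_⟩ <;>
          nlinarith [sq_nonneg (q (V ω) k + q (V ω) l), sq_nonneg (q (V ω) k - q (V ω) l)]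
    have hIsq : ∀ k l ω, I ω * (q (V ω) k * q (V ω) l)
        = (I ω * q (V ω) k) * (I ω * q (V ω) l) := by
      intro k l ω
      rcases hI01 ω with h | h <;> rw [h] <;> ring
    have hint2 : ∀ k l, Integrable (fun ω => (I ω * q (V ω) k) * (I ω * q (V ω) l)) μ :=
      fun k l => (hoff k l).congr (Filter.Eventually.of_forall fun ω => hIsq k l ω)
    have hMeq : (Matrix.of fun k l =>
        ∫ ω, S.indicator (fun _ => (1 : ℝ)) (V ω) * (q (V ω) k * q (V ω) l) ∂μ)
        = Matrix.of fun k l => ∫ ω, (I ω * q (V ω) k) * (I ω * q (V ω) l) ∂μ := by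
      ext k l
      simp only [of_apply]
      exact integral_congr_ae (Filter.Eventually.of_forall fun ω => hIsq k l ω)
    have hpos := (posDef_iff_dotProduct_mulVec.mp hPD).2 hd
    rw [star_trivial, hMeq, quad_form μ (fun k ω => I ω * q (V ω) k) d hint2] at hpos
    have hz : ∀ᵐ ω ∂μ, (∑ k, d k * (I ω * q (V ω) k)) ^ 2 = 0 := by
      have hh := ae_of_ae_map hV.aemeasurable hae0
      filter_upwards [hh] with ω hω
      by_cases h : V ω ∈ S
      · have hI : I ω = 1 := by simp [hIdef, Set.indicator_of_mem h]
        simp only [hI, one_mul]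
        rw [hω h]
        simp
      · have hI : I ω = 0 := by simp [hIdef, Set.indicator_of_notMem h]
        simp [hI]
    rw [integral_congr_ae hz, integral_zero] at hpos
    exact lt_irrefl 0 hpos
  -- main positive definiteness
  rw [posDef_iff_dotProduct_mulVec]
  constructor
  · show _ = _
    ext a b
    simp only [conjTranspose_apply, of_apply, star_trivial]
    exact integral_congr_ae (Filter.Eventually.of_forall fun ω => mul_comm _ _)
  · intro c hc
    rw [star_trivial]
    set u : Fin 2 × Fin K → Ω → ℝ :=
      fun a ω => (if a.1 = 0 then 1 else X ω) * q (V ω) a.2 with hudef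
    have humeas : ∀ a, Measurable (u a) := by
      intro a
      by_cases h : a.1 = 0
      · have : u a = fun ω => q (V ω) a.2 := by funext ω; simp [hudef, h]
        rw [this]; exact hQmeas a.2
      · have : u a = fun ω => X ω * q (V ω) a.2 := by funext ω; simp [hudef, h]
        rw [this]; exact hX.mul (hQmeas a.2)
    have he : ∀ (a : Fin 2 × Fin K) ω, |if a.1 = 0 then (1:ℝ) else X ω| ≤ 1 := by
      intro a ω
      by_cases h : a.1 = 0
      · simp [h]
      · rw [if_neg h, abs_le]
        exact ⟨by linarith [(hX01 ω).1], (hX01 ω).2⟩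
    have hint : ∀ a b, Integrable (fun ω => u a ω * u b ω) μ := by
      intro a b
      refine Integrable.mono' hq2 ((humeas a).mul (humeas b)).aestronglyMeasurable
        (Filter.Eventually.of_forall fun ω => ?_)
      rw [Real.norm_eq_abs]
      have h1 := he a ω; have h2 := he b ω
      have h3 := habsB a.2 b.2 ω
      calc |u a ω * u b ω|
          = |if a.1 = 0 then (1:ℝ) else X ω| * |if b.1 = 0 then (1:ℝ) else X ω|
            * |q (V ω) a.2 * q (V ω) b.2| := by
            simp only [hudef, abs_mul]; ring
        _ ≤ 1 * 1 * |q (V ω) a.2 * q (V ω) b.2| := by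
            gcongr <;> first | exact abs_nonneg _ | exact he a ω | exact he b ω
        _ = |q (V ω) a.2 * q (V ω) b.2| := by ring
        _ ≤ _ := h3
    have hquad := quad_form μ u c hint
    rw [hquad]
    -- W as f + X g
    set d0 : Fin K → ℝ := fun k => c (0, k) with hd0
    set d1 : Fin K → ℝ := fun k => c (1, k) with hd1
    set f : 𝒱 → ℝ := fun v => ∑ k, d0 k * q v k with hf
    set g : 𝒱 → ℝ := fun v => ∑ k, d1 k * q v k with hg
    have hWeq : ∀ ω, (∑ a, c a * u a ω) = f (V ω) + X ω * g (V ω) := by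
      intro ω
      rw [Fintype.sum_prod_type, Fin.sum_univ_two]
      simp only [hudef, hf, hg, hd0, hd1, Finset.mul_sum]
      congr 1
      · exact Finset.sum_congr rfl fun k _ => by simp
      · refine Finset.sum_congr rfl fun k _ => ?_
        rw [show (if (1 : Fin 2) = 0 then (1:ℝ) else X ω) = X ω from if_neg (by decide)]
        ring
    simp_rw [hWeq]
    -- pass to the compProd measure
    set ind : ℝ → ℝ := Set.indicator {(1 : ℝ)} (fun _ => (1 : ℝ)) with hind
    set F2 : 𝒱 × ℝ → ℝ := fun p =>
      (1 - ind p.2) * (f p.1) ^ 2 + ind p.2 * (f p.1 + g p.1) ^ 2 with hF2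
    have hind_meas : Measurable ind :=
      measurable_const.indicator (measurableSet_singleton 1)
    have hfmeas : Measurable f := hlin_meas d0
    have hgmeas : Measurable g := hlin_meas d1
    have hF2meas : Measurable F2 := by
      apply Measurable.add
      · exact ((measurable_const.sub (hind_meas.comp measurable_snd)).mul
          (((hfmeas.comp measurable_fst)).pow_const 2))
      · exact ((hind_meas.comp measurable_snd).mul
          (((hfmeas.comp measurable_fst).add (hgmeas.comp measurable_fst)).pow_const 2))
    have hcomp : ∀ ω, (f (V ω) + X ω * g (V ω)) ^ 2 = F2 (V ω, X ω) := by
      intro ω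
      rcases hbin ω with h | h <;>
        simp [hF2, hind, h, Set.indicator_apply] <;> ring
    have hfg_sum : ∀ v, f v + g v = ∑ k, (d0 k + d1 k) * q v k := by
      intro v
      simp only [hf, hg, ← Finset.sum_add_distrib]
      exact Finset.sum_congr rfl fun k _ => by ring
    have hW2int : Integrable (fun ω => (f (V ω) + X ω * g (V ω)) ^ 2) μ := by
      refine Integrable.mono'
        (((hlin_sq_int d0).const_mul 2).add ((hlin_sq_int d1).const_mul 2))
        ((((hfmeas.comp hV).add (hX.mul (hgmeas.comp hV))).pow_const 2).aestronglyMeasurable)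
        (Filter.Eventually.of_forall fun ω => ?_)
      rw [Real.norm_eq_abs, abs_of_nonneg (sq_nonneg _)]
      obtain ⟨hx0, hx1⟩ := hX01 ω
      simp only [Pi.add_apply]
      show (f (V ω) + X ω * g (V ω)) ^ 2 ≤ 2 * (f (V ω)) ^ 2 + 2 * (g (V ω)) ^ 2
      nlinarith [sq_nonneg (f (V ω) - X ω * g (V ω)),
        mul_nonneg (mul_nonneg (sub_nonneg.mpr hx1) (by linarith : (0:ℝ) ≤ 1 + X ω))
          (sq_nonneg (g (V ω)))]
    have hF2comp_int : Integrable (fun ω => F2 (V ω, X ω)) μ :=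
      hW2int.congr (Filter.Eventually.of_forall fun ω => hcomp ω)
    have hVXmeas : Measurable fun ω => (V ω, X ω) := hV.prodMk hX
    have hF2int : Integrable F2 (ν ⊗ₘ κ) := by
      rw [← hdis]
      exact (integrable_map_measure hF2meas.aestronglyMeasurable
        hVXmeas.aemeasurable).mpr hF2comp_int
    have hstep1 : ∫ ω, (f (V ω) + X ω * g (V ω)) ^ 2 ∂μ = ∫ p, F2 p ∂(ν ⊗ₘ κ) := by
      rw [← hdis, integral_map hVXmeas.aemeasurable hF2meas.aestronglyMeasurable]
      exact integral_congr_ae (Filter.Eventually.of_forall fun ω => hcomp ω)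
    have hinner : ∀ v, ∫ x, F2 (v, x) ∂(κ v)
        = (1 - P v) * (f v) ^ 2 + P v * (f v + g v) ^ 2 := by
      intro v
      have hii : Integrable ind (κ v) :=
        (integrable_const (1 : ℝ)).indicator (measurableSet_singleton 1)
      have h1i : Integrable (fun x => (1 - ind x) * (f v) ^ 2) (κ v) :=
        ((integrable_const (1 : ℝ)).sub hii).mul_const _
      have h2i : Integrable (fun x => ind x * (f v + g v) ^ 2) (κ v) := hii.mul_const _
      rw [show (fun x => F2 (v, x))
          = fun x => (1 - ind x) * (f v) ^ 2 + ind x * (f v + g v) ^ 2 from rfl]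
      rw [integral_add h1i h2i, integral_mul_const, integral_mul_const,
        integral_sub (integrable_const 1) hii]
      have hindint : ∫ x, ind x ∂(κ v) = P v := by
        rw [hind, hPdef]
        exact integral_indicator_one (measurableSet_singleton 1)
      rw [hindint]
      simp
    have hstep2 : ∫ p, F2 p ∂(ν ⊗ₘ κ)
        = ∫ v, (1 - P v) * (f v) ^ 2 + P v * (f v + g v) ^ 2 ∂ν := by
      rw [MeasureTheory.Measure.integral_compProd hF2int]
      exact integral_congr_ae (Filter.Eventually.of_forall fun v => hinner v)
    set φ : 𝒱 → ℝ := fun v => (1 - P v) * (f v) ^ 2 + P v * (f v + g v) ^ 2 with hφ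
    have hφnn : ∀ v, 0 ≤ φ v := by
      intro v
      show 0 ≤ (1 - P v) * (f v) ^ 2 + P v * (f v + g v) ^ 2
      obtain ⟨h0, h1⟩ := hP01 v
      have h2 := mul_nonneg (sub_nonneg.mpr h1) (sq_nonneg (f v))
      have h3 := mul_nonneg h0 (sq_nonneg (f v + g v))
      linarith
    have hφmeas : Measurable φ := by
      apply Measurable.add
      · exact (measurable_const.sub hPmeas).mul (hfmeas.pow_const 2)
      · exact hPmeas.mul ((hfmeas.add hgmeas).pow_const 2)
    have hφint : Integrable φ ν := by
      have hbint : Integrable (fun v => (f v) ^ 2 + (f v + g v) ^ 2) ν := by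
        refine (hlin_sq_int_ν d0).add ?_
        have := hlin_sq_int_ν (fun k => d0 k + d1 k)
        exact this.congr (Filter.Eventually.of_forall fun v => by
          show (∑ k, (d0 k + d1 k) * q v k) ^ 2 = (f v + g v) ^ 2
          rw [hfg_sum v])
      refine Integrable.mono' hbint hφmeas.aestronglyMeasurable
        (Filter.Eventually.of_forall fun v => ?_)
      rw [Real.norm_eq_abs, abs_of_nonneg (hφnn v)]
      obtain ⟨h0, h1⟩ := hP01 v
      show (1 - P v) * (f v) ^ 2 + P v * (f v + g v) ^ 2 ≤ (f v) ^ 2 + (f v + g v) ^ 2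
      nlinarith [mul_nonneg h0 (sq_nonneg (f v)),
        mul_nonneg (sub_nonneg.mpr h1) (sq_nonneg (f v + g v))]
    rw [show (∫ ω, (f (V ω) + X ω * g (V ω)) ^ 2 ∂μ) = ∫ v, φ v ∂ν from
      hstep1.trans hstep2]
    rcases eq_or_lt_of_le (integral_nonneg (f := φ) hφnn) with he0 | hlt
    · exfalso
      have hae : φ =ᵐ[ν] 0 :=
        (integral_eq_zero_iff_of_nonneg_ae (Filter.Eventually.of_forall hφnn) hφint).mp he0.symm
      have hS0 : ∀ᵐ v ∂ν, v ∈ S → f v = 0 ∧ g v = 0 := by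
        filter_upwards [hae] with v hv
        intro hvS
        obtain ⟨hp0, hp1⟩ := hP v hvS
        have hv' : (1 - P v) * (f v) ^ 2 + P v * (f v + g v) ^ 2 = 0 := hv
        have hPlt : P v < 1 := hp1
        have hPgt : 0 < P v := hp0
        have hf2 : (f v) ^ 2 ≤ 0 := by
          nlinarith [mul_nonneg (le_of_lt hPgt) (sq_nonneg (f v + g v))]
        have hfv : f v = 0 := by
          have h4 := le_antisymm hf2 (sq_nonneg (f v))
          exact (pow_eq_zero_iff (n := 2) (by norm_num)).mp h4
        have hfg2 : (f v + g v) ^ 2 ≤ 0 := by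
          nlinarith [mul_nonneg (by linarith : (0:ℝ) ≤ 1 - P v) (sq_nonneg (f v))]
        have hfgv : f v + g v = 0 := by
          have h4 := le_antisymm hfg2 (sq_nonneg (f v + g v))
          exact (pow_eq_zero_iff (n := 2) (by norm_num)).mp h4
        exact ⟨hfv, by linarith⟩
      -- pick a nonzero coordinate block
      obtain ⟨⟨i, k⟩, ha⟩ := Function.ne_iff.mp hc
      fin_cases i
      · exact key d0 (Function.ne_iff.mpr ⟨k, ha⟩)
          (hS0.mono fun v hv hvS => (hv hvS).1)
      · exact key d1 (Function.ne_iff.mpr ⟨k, ha⟩)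
          (hS0.mono fun v hv hvS => (hv hvS).2)
    · exact hlt
end

section
/- Suppose Y = p(X)'ε where p(X) ∈ ℝ^J is a known random vector with E[‖p(X)‖²] < ∞, E[Y²] < ∞, and E[ε | X, V] = E[ε | V] =: q₀(V). If E[p(X)p(X)' | V] is nonsingular with probability one, then q₀(V) is identified: any measurable function q̃ with E[Y | X,V] = p(X)'q̃(V) almost surely satisfies q̃(V) = q₀(V) almost surely. -/
open MeasureTheory Matrix

lemma meas_comap' {Ω β γ : Type*} [MeasurableSpace β] [MeasurableSpace γ]
    (f : Ω → β) {g : β → γ} (hg : Measurable g) :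
    Measurable[MeasurableSpace.comap f inferInstance] fun ω => g (f ω) :=
  hg.comp (Measurable.of_comap_le le_rfl)

lemma measConst {Ω : Type*} (m : MeasurableSpace Ω) (c : ℝ) : Measurable[m] fun _ => c :=
  measurable_const

lemma msetIInter {Ω ι : Type*} [Countable ι] (m : MeasurableSpace Ω) {f : ι → Set Ω}
    (h : ∀ b, MeasurableSet[m] (f b)) : MeasurableSet[m] (⋂ b, f b) :=
  MeasurableSet.iInter h

lemma measAbs {Ω : Type*} (m : MeasurableSpace Ω) {f : Ω → ℝ} (hf : Measurable[m] f) :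
    Measurable[m] fun ω => |f ω| := hf.abs

lemma intA {Ω : Type*} {M0 : MeasurableSpace Ω} {μ : @Measure Ω M0} [IsFiniteMeasure μ]
    {m : MeasurableSpace Ω} (hm : m ≤ M0) {h f : Ω → ℝ}
    (hh : StronglyMeasurable[m] h) (C : ℝ) (hC : ∀ ω, ‖h ω‖ ≤ C)
    (hf : Integrable f μ) :
    ∫ ω, h ω * f ω ∂μ = ∫ ω, h ω * (μ[f|m]) ω ∂μ := by
  have hmul := condExp_stronglyMeasurable_mul_of_bound hm hh hf C (Filter.Eventually.of_forall hC)
  have hint : Integrable (fun ω => h ω * f ω) μ :=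
    hf.bdd_mul ((hh.mono hm).aestronglyMeasurable) (Filter.Eventually.of_forall hC)
  calc ∫ ω, h ω * f ω ∂μ
      = ∫ ω, (μ[(fun ω => h ω * f ω)|m]) ω ∂μ :=
        (integral_condExp hm (f := fun ω => h ω * f ω)).symm
    _ = ∫ ω, h ω * (μ[f|m]) ω ∂μ := integral_congr_ae hmul

lemma mulVec_eq_zero_of_isUnit {J : ℕ} {A : Matrix (Fin J) (Fin J) ℝ} (hA : IsUnit A)
    {v : Fin J → ℝ} (hv : A.mulVec v = 0) : v = 0 := by
  have h1 : A⁻¹ * A = 1 := Matrix.nonsing_inv_mul A (A.isUnit_iff_isUnit_det.mp hA)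
  calc v = (A⁻¹ * A).mulVec v := by rw [h1, Matrix.one_mulVec]
    _ = A⁻¹.mulVec (A.mulVec v) := by rw [Matrix.mulVec_mulVec]
    _ = 0 := by rw [hv, Matrix.mulVec_zero]

lemma abs_sub_le'' (a b : ℝ) : |a - b| ≤ |a| + |b| := by
  rw [sub_eq_add_neg]
  exact (abs_add_le _ _).trans (by rw [abs_neg])

theorem stmt9_aux {Ω : Type*} {M0 : MeasurableSpace Ω}
    (μ : Measure Ω) [IsProbabilityMeasure μ] {J : ℕ}
    {m mV : MeasurableSpace Ω} (hm : m ≤ M0) (hmVle : mV ≤ M0)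
    (P : Fin J → Ω → ℝ) (hPm : ∀ i, Measurable[m] (P i))
    (ε : Ω → Fin J → ℝ) (hε : ∀ j, Integrable (fun ω => ε ω j) μ)
    (Y : Ω → ℝ) (hYdef : ∀ ω, Y ω = ∑ j, P j ω * ε ω j)
    (hY2 : Integrable (fun ω => (Y ω) ^ 2) μ)
    (hp2 : Integrable (fun ω => ∑ j, (P j ω) ^ 2) μ)
    (Q0 Qt : Fin J → Ω → ℝ)
    (hQ0m : ∀ j, Measurable[mV] (Q0 j)) (hQtm : ∀ j, Measurable[mV] (Qt j))
    (hmVm : mV ≤ m)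
    (hce : ∀ j, (μ[fun ω => ε ω j|m]) =ᵐ[μ] Q0 j)
    (hnonsing : ∀ᵐ ω ∂μ,
      IsUnit (Matrix.of fun i j => (μ[fun ω' => P i ω' * P j ω'|mV]) ω))
    (hYc : (μ[Y|m]) =ᵐ[μ] fun ω => ∑ j, P j ω * Qt j ω) :
    ∀ᵐ ω ∂μ, (fun j => Qt j ω) = fun j => Q0 j ω := by
  classical
  set d : Fin J → Ω → ℝ := fun j ω => Qt j ω - Q0 j ω with hd_def
  set S : Ω → ℝ := fun ω => ∑ j, P j ω * d j ω with hS_def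
  have hdmV : ∀ j, Measurable[mV] (d j) := fun j => (hQtm j).sub (hQ0m j)
  have hdm : ∀ j, Measurable[m] (d j) := fun j => (hdmV j).mono hmVm le_rfl
  have hQtmm : ∀ j, Measurable[m] (Qt j) := fun j => (hQtm j).mono hmVm le_rfl
  have hQ0mm : ∀ j, Measurable[m] (Q0 j) := fun j => (hQ0m j).mono hmVm le_rfl
  have hSm : Measurable[m] S := Finset.measurable_sum _ fun j _ => (hPm j).mul (hdm j)
  have hPM0 : ∀ i, Measurable[M0] (P i) := fun i => (hPm i).mono hm le_rfl
  -- integrability facts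
  have hYaesm : AEStronglyMeasurable[M0] Y μ := by
    have : Y = fun ω => ∑ j, P j ω * ε ω j := funext hYdef
    rw [this]
    exact Finset.aestronglyMeasurable_fun_sum _ fun j _ =>
      ((hPM0 j).aestronglyMeasurable.mul (hε j).1)
  have hYint : Integrable Y μ := by
    refine (hY2.add (integrable_const 1)).mono' hYaesm (Filter.Eventually.of_forall fun ω => ?_)
    have h1 : |Y ω| ≤ Y ω ^ 2 + 1 := by nlinarith [sq_abs (Y ω), sq_nonneg (|Y ω| - 1)]
    have h2 : (0:ℝ) ≤ Y ω ^ 2 + 1 := by positivity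
    simpa [Real.norm_eq_abs, abs_of_nonneg h2] using h1
  have hppInt : ∀ i j, Integrable (fun ω => P i ω * P j ω) μ := by
    intro i j
    refine hp2.mono' ((hPM0 i).mul (hPM0 j)).aestronglyMeasurable
      (Filter.Eventually.of_forall fun ω => ?_)
    have h1 : (P i ω)^2 ≤ ∑ k, (P k ω)^2 :=
      Finset.single_le_sum (f := fun k => (P k ω)^2) (fun k _ => sq_nonneg _) (Finset.mem_univ i)
    have h2 : (P j ω)^2 ≤ ∑ k, (P k ω)^2 :=
      Finset.single_le_sum (f := fun k => (P k ω)^2) (fun k _ => sq_nonneg _) (Finset.mem_univ j)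
    rw [Real.norm_eq_abs, abs_mul]
    nlinarith [sq_nonneg (|P i ω| - |P j ω|), sq_abs (P i ω), sq_abs (P j ω)]
  -- truncation sets for step 1
  set C : ℕ → Set Ω := fun n =>
    {ω | ∀ j, |P j ω| ≤ (n:ℝ)} ∩
      ({ω | ∀ j, |Qt j ω| ≤ (n:ℝ)} ∩ {ω | ∀ j, |Q0 j ω| ≤ (n:ℝ)}) with hC_def
  have hCm : ∀ n, MeasurableSet[m] (C n) := by
    intro n
    refine MeasurableSet.inter ?_ (MeasurableSet.inter ?_ ?_)
    · rw [Set.setOf_forall]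
      exact msetIInter m fun j => measAbs m (hPm j) measurableSet_Iic
    · rw [Set.setOf_forall]
      exact msetIInter m fun j => measAbs m (hQtmm j) measurableSet_Iic
    · rw [Set.setOf_forall]
      exact msetIInter m fun j => measAbs m (hQ0mm j) measurableSet_Iic
  have hdbd : ∀ n, ∀ ω ∈ C n, ∀ j, |d j ω| ≤ 2 * n := by
    intro n ω hω j
    have h1 := hω.2.1 j
    have h2 := hω.2.2 j
    calc |d j ω| ≤ |Qt j ω| + |Q0 j ω| := abs_sub_le'' _ _
      _ ≤ 2 * n := by linarith
  have hSbd : ∀ n : ℕ, ∀ ω ∈ C n, |S ω| ≤ (J:ℝ) * (n * (2 * n)) := by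
    intro n ω hω
    calc |S ω| ≤ ∑ j, |P j ω * d j ω| := Finset.abs_sum_le_sum_abs _ _
      _ ≤ ∑ _j : Fin J, (n:ℝ) * (2 * n) := by
          refine Finset.sum_le_sum fun j _ => ?_
          rw [abs_mul]
          exact mul_le_mul (hω.1 j) (hdbd n ω hω j) (abs_nonneg _) (Nat.cast_nonneg n)
      _ = (J:ℝ) * (n * (2 * n)) := by
          rw [Finset.sum_const, Finset.card_univ, Fintype.card_fin, nsmul_eq_mul]
  -- Step 1 : a.e. on each C n, S vanishes
  have key1 : ∀ n : ℕ, ∀ᵐ ω ∂μ, ω ∈ C n → S ω = 0 := by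
    intro n
    set B : ℝ := (J:ℝ) * (n * (2 * n)) with hB_def
    have hB0 : (0:ℝ) ≤ B := by positivity
    set h : Ω → ℝ := (C n).indicator S with hh_def
    have hhsm : StronglyMeasurable[m] h := hSm.stronglyMeasurable.indicator (hCm n)
    have hhbd : ∀ ω, ‖h ω‖ ≤ B := by
      intro ω
      rw [Real.norm_eq_abs, hh_def]
      by_cases hω : ω ∈ C n
      · rw [Set.indicator_of_mem hω]; exact hSbd n ω hω
      · rw [Set.indicator_of_notMem hω]; simpa using hB0
    have hhpbd : ∀ j ω, ‖h ω * P j ω‖ ≤ B * n := by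
      intro j ω
      rw [Real.norm_eq_abs, abs_mul, hh_def]
      by_cases hω : ω ∈ C n
      · rw [Set.indicator_of_mem hω]
        exact mul_le_mul (hSbd n ω hω) (hω.1 j) (abs_nonneg _) hB0
      · rw [Set.indicator_of_notMem hω]; simp; positivity
    have eq1 : ∫ ω, h ω * Y ω ∂μ = ∫ ω, h ω * (∑ j, P j ω * Qt j ω) ∂μ := by
      rw [intA hm hhsm B hhbd hYint]
      refine integral_congr_ae ?_
      filter_upwards [hYc] with ω hω
      simp only [hω]
    have eq2term : ∀ j, ∫ ω, (h ω * P j ω) * ε ω j ∂μ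
        = ∫ ω, (h ω * P j ω) * Q0 j ω ∂μ := by
      intro j
      have step := intA (μ := μ) hm (h := fun ω => h ω * P j ω) (f := fun ω => ε ω j)
        (hhsm.mul (hPm j).stronglyMeasurable) (B * n) (hhpbd j) (hε j)
      rw [step]
      refine integral_congr_ae ?_
      filter_upwards [hce j] with ω hω
      simp only [hω]
    have intterm : ∀ j, Integrable (fun ω => (h ω * P j ω) * ε ω j) μ := by
      intro j
      exact (hε j).bdd_mul
        ((hhsm.mono hm).aestronglyMeasurable.mul (hPM0 j).aestronglyMeasurable)
        (Filter.Eventually.of_forall (hhpbd j))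
    have intterm' : ∀ j, Integrable (fun ω => (h ω * P j ω) * Q0 j ω) μ := by
      intro j
      refine (integrable_const ((B * n) * n)).mono'
        (((hhsm.mono hm).aestronglyMeasurable.mul (hPM0 j).aestronglyMeasurable).mul
          ((hQ0mm j).mono hm le_rfl).aestronglyMeasurable)
        (Filter.Eventually.of_forall fun ω => ?_)
      rw [Real.norm_eq_abs, abs_mul]
      by_cases hω : ω ∈ C n
      · refine mul_le_mul ?_ (hω.2.2 j) (abs_nonneg _) ?_
        · simpa only [Real.norm_eq_abs] using hhpbd j ω
        · positivity
      · have h0 : h ω = 0 := by rw [hh_def, Set.indicator_of_notMem hω]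
        rw [h0]; simp; positivity
    have eq2 : ∫ ω, h ω * Y ω ∂μ = ∫ ω, h ω * (∑ j, P j ω * Q0 j ω) ∂μ := by
      calc ∫ ω, h ω * Y ω ∂μ
          = ∫ ω, ∑ j, (h ω * P j ω) * ε ω j ∂μ := by
            refine integral_congr_ae (Filter.Eventually.of_forall fun ω => ?_)
            simp only [hYdef, Finset.mul_sum, mul_assoc]
        _ = ∑ j, ∫ ω, (h ω * P j ω) * ε ω j ∂μ :=
            integral_finset_sum _ fun j _ => intterm j
        _ = ∑ j, ∫ ω, (h ω * P j ω) * Q0 j ω ∂μ :=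
            Finset.sum_congr rfl fun j _ => eq2term j
        _ = ∫ ω, ∑ j, (h ω * P j ω) * Q0 j ω ∂μ :=
            (integral_finset_sum _ fun j _ => intterm' j).symm
        _ = ∫ ω, h ω * (∑ j, P j ω * Q0 j ω) ∂μ := by
            refine integral_congr_ae (Filter.Eventually.of_forall fun ω => ?_)
            simp only [Finset.mul_sum, mul_assoc]
    have intqt : Integrable (fun ω => h ω * (∑ j, P j ω * Qt j ω)) μ := by
      refine (integrable_const (B * ((J:ℝ) * (n * n)))).mono'
        ((hhsm.mono hm).aestronglyMeasurable.mul
          (Finset.aestronglyMeasurable_fun_sum _ fun j _ =>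
            ((hPM0 j).mul ((hQtmm j).mono hm le_rfl)).aestronglyMeasurable))
        (Filter.Eventually.of_forall fun ω => ?_)
      rw [Real.norm_eq_abs, abs_mul]
      by_cases hω : ω ∈ C n
      · refine mul_le_mul (by rw [hh_def, Set.indicator_of_mem hω]; exact hSbd n ω hω) ?_
          (abs_nonneg _) hB0
        calc |∑ j, P j ω * Qt j ω| ≤ ∑ j, |P j ω * Qt j ω| :=
              Finset.abs_sum_le_sum_abs _ _
          _ ≤ ∑ _j : Fin J, (n:ℝ) * n := by
              refine Finset.sum_le_sum fun j _ => ?_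
              rw [abs_mul]
              exact mul_le_mul (hω.1 j) (hω.2.1 j) (abs_nonneg _) (Nat.cast_nonneg n)
          _ = (J:ℝ) * (n * n) := by
              rw [Finset.sum_const, Finset.card_univ, Fintype.card_fin, nsmul_eq_mul]
      · have h0 : h ω = 0 := by rw [hh_def, Set.indicator_of_notMem hω]
        rw [h0]; simp; positivity
    have intq0 : Integrable (fun ω => h ω * (∑ j, P j ω * Q0 j ω)) μ := by
      refine (integrable_const (B * ((J:ℝ) * (n * n)))).mono'
        ((hhsm.mono hm).aestronglyMeasurable.mul
          (Finset.aestronglyMeasurable_fun_sum _ fun j _ =>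
            ((hPM0 j).mul ((hQ0mm j).mono hm le_rfl)).aestronglyMeasurable))
        (Filter.Eventually.of_forall fun ω => ?_)
      rw [Real.norm_eq_abs, abs_mul]
      by_cases hω : ω ∈ C n
      · refine mul_le_mul (by rw [hh_def, Set.indicator_of_mem hω]; exact hSbd n ω hω) ?_
          (abs_nonneg _) hB0
        calc |∑ j, P j ω * Q0 j ω| ≤ ∑ j, |P j ω * Q0 j ω| :=
              Finset.abs_sum_le_sum_abs _ _
          _ ≤ ∑ _j : Fin J, (n:ℝ) * n := by
              refine Finset.sum_le_sum fun j _ => ?_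
              rw [abs_mul]
              exact mul_le_mul (hω.1 j) (hω.2.2 j) (abs_nonneg _) (Nat.cast_nonneg n)
          _ = (J:ℝ) * (n * n) := by
              rw [Finset.sum_const, Finset.card_univ, Fintype.card_fin, nsmul_eq_mul]
      · have h0 : h ω = 0 := by rw [hh_def, Set.indicator_of_notMem hω]
        rw [h0]; simp; positivity
    have eq3 : ∫ ω, (C n).indicator (fun ω' => S ω' ^ 2) ω ∂μ = 0 := by
      have hdiff : ∀ ω, (C n).indicator (fun ω' => S ω' ^ 2) ω
          = h ω * (∑ j, P j ω * Qt j ω) - h ω * (∑ j, P j ω * Q0 j ω) := by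
        intro ω
        by_cases hω : ω ∈ C n
        · simp only [hh_def, Set.indicator_of_mem hω]
          have hexp : (∑ j, P j ω * Qt j ω) - ∑ j, P j ω * Q0 j ω = S ω := by
            rw [← Finset.sum_sub_distrib]
            show ∑ j, (P j ω * Qt j ω - P j ω * Q0 j ω) = ∑ j, P j ω * d j ω
            exact Finset.sum_congr rfl fun j _ => by
              show P j ω * Qt j ω - P j ω * Q0 j ω = P j ω * (Qt j ω - Q0 j ω)
              ring
          rw [← mul_sub, hexp]
          ring
        · simp only [hh_def, Set.indicator_of_notMem hω]; ring
      calc ∫ ω, (C n).indicator (fun ω' => S ω' ^ 2) ω ∂μ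
          = ∫ ω, (h ω * (∑ j, P j ω * Qt j ω) - h ω * (∑ j, P j ω * Q0 j ω)) ∂μ :=
            integral_congr_ae (Filter.Eventually.of_forall hdiff)
        _ = (∫ ω, h ω * (∑ j, P j ω * Qt j ω) ∂μ)
              - ∫ ω, h ω * (∑ j, P j ω * Q0 j ω) ∂μ := integral_sub intqt intq0
        _ = 0 := by rw [← eq1, ← eq2]; ring
    have intsq : Integrable (fun ω => (C n).indicator (fun ω' => S ω' ^ 2) ω) μ := by
      refine (integrable_const (B * B)).mono'
        ((((hSm.mono hm le_rfl).pow_const 2).aestronglyMeasurable).indicator (hm _ (hCm n)))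
        (Filter.Eventually.of_forall fun ω => ?_)
      rw [Real.norm_eq_abs]
      by_cases hω : ω ∈ C n
      · rw [Set.indicator_of_mem hω]
        have h1 := hSbd n ω hω
        have h2 := abs_nonneg (S ω)
        rw [abs_of_nonneg (sq_nonneg _)]
        calc S ω ^ 2 = |S ω| * |S ω| := by rw [← abs_mul, sq, abs_of_nonneg (mul_self_nonneg _)]
          _ ≤ B * B := mul_le_mul h1 h1 h2 hB0
      · rw [Set.indicator_of_notMem hω]; simpa using mul_nonneg hB0 hB0
    have hzero : (fun ω => (C n).indicator (fun ω' => S ω' ^ 2) ω) =ᵐ[μ] 0 :=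
      (integral_eq_zero_iff_of_nonneg
        (fun ω => Set.indicator_nonneg (fun ω' _ => sq_nonneg (S ω')) ω) intsq).mp eq3
    filter_upwards [hzero] with ω hω hmem
    have hsq : S ω ^ 2 = 0 := by
      have h' := hω
      simp only [Pi.zero_apply] at h'
      rwa [Set.indicator_of_mem hmem] at h'
    exact sq_eq_zero_iff.mp hsq
  -- S = 0 a.e.
  have hS0 : ∀ᵐ ω ∂μ, S ω = 0 := by
    filter_upwards [ae_all_iff.mpr key1] with ω hω
    obtain ⟨n, hn⟩ := exists_nat_ge
      ((∑ j, |P j ω|) + ((∑ j, |Qt j ω|) + ∑ j, |Q0 j ω|))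
    have s1 : (0:ℝ) ≤ ∑ j, |P j ω| := Finset.sum_nonneg fun j _ => abs_nonneg _
    have s2 : (0:ℝ) ≤ ∑ j, |Qt j ω| := Finset.sum_nonneg fun j _ => abs_nonneg _
    have s3 : (0:ℝ) ≤ ∑ j, |Q0 j ω| := Finset.sum_nonneg fun j _ => abs_nonneg _
    refine hω n ⟨fun j => ?_, fun j => ?_, fun j => ?_⟩
    · have := Finset.single_le_sum (f := fun j => |P j ω|)
        (fun k _ => abs_nonneg _) (Finset.mem_univ j)
      linarith
    · have := Finset.single_le_sum (f := fun j => |Qt j ω|)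
        (fun k _ => abs_nonneg _) (Finset.mem_univ j)
      linarith
    · have := Finset.single_le_sum (f := fun j => |Q0 j ω|)
        (fun k _ => abs_nonneg _) (Finset.mem_univ j)
      linarith
  -- Step 2 : truncation sets on V
  set D : ℕ → Set Ω := fun n => {ω | ∀ j, |d j ω| ≤ (n:ℝ)} with hD_def
  have hDm : ∀ n, MeasurableSet[mV] (D n) := by
    intro n
    show MeasurableSet[mV] {ω | ∀ j, |d j ω| ≤ (n:ℝ)}
    rw [Set.setOf_forall]
    exact msetIInter mV fun j => measAbs mV (hdmV j) measurableSet_Iic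
  have key2 : ∀ (i : Fin J) (n : ℕ), ∀ᵐ ω ∂μ,
      ∑ j, (D n).indicator (d j) ω * (μ[fun ω' => P i ω' * P j ω'|mV]) ω = 0 := by
    intro i n
    have c1 : (fun ω => (D n).indicator (fun ω' => P i ω' * S ω') ω) =ᵐ[μ] (0 : Ω → ℝ) := by
      filter_upwards [hS0] with ω hω
      simp [Set.indicator_apply, hω]
    have c2 : (μ[fun ω => (D n).indicator (fun ω' => P i ω' * S ω') ω|mV]) =ᵐ[μ] 0 := by
      have h' := condExp_congr_ae (m := mV) c1
      rwa [condExp_zero] at h'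
    have c3 : (fun ω => (D n).indicator (fun ω' => P i ω' * S ω') ω)
        = fun ω => ∑ j, ((D n).indicator (d j) ω) * (P i ω * P j ω) := by
      funext ω
      by_cases hω : ω ∈ D n
      · simp only [Set.indicator_of_mem hω]
        show P i ω * ∑ j, P j ω * d j ω = _
        rw [Finset.mul_sum]
        exact Finset.sum_congr rfl fun j _ => by ring
      · simp [Set.indicator_of_notMem hω]
    have cint : ∀ j, Integrable
        (fun ω => ((D n).indicator (d j) ω) * (P i ω * P j ω)) μ := by
      intro j
      refine (hppInt i j).bdd_mul (c := (n:ℝ))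
        (((hdmV j).mono hmVle le_rfl).aestronglyMeasurable.indicator (hmVle _ (hDm n)))
        (Filter.Eventually.of_forall fun ω => ?_)
      rw [Real.norm_eq_abs]
      by_cases hω : ω ∈ D n
      · rw [Set.indicator_of_mem hω]; exact hω j
      · rw [Set.indicator_of_notMem hω]; simp
    have c4 : ∀ j, (μ[fun ω => ((D n).indicator (d j) ω) * (P i ω * P j ω)|mV])
        =ᵐ[μ] fun ω => ((D n).indicator (d j) ω) * (μ[fun ω' => P i ω' * P j ω'|mV]) ω := by
      intro j
      refine condExp_stronglyMeasurable_mul_of_bound hmVle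
        ((hdmV j).stronglyMeasurable.indicator (hDm n)) (hppInt i j) n
        (Filter.Eventually.of_forall fun ω => ?_)
      rw [Real.norm_eq_abs]
      by_cases hω : ω ∈ D n
      · rw [Set.indicator_of_mem hω]; exact hω j
      · rw [Set.indicator_of_notMem hω]; simp
    have c5 : (μ[fun ω => (D n).indicator (fun ω' => P i ω' * S ω') ω|mV])
        =ᵐ[μ] fun ω => ∑ j, ((D n).indicator (d j) ω)
          * (μ[fun ω' => P i ω' * P j ω'|mV]) ω := by
      rw [c3]
      have hfun : (fun ω => ∑ j, ((D n).indicator (d j) ω) * (P i ω * P j ω))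
          = ∑ j : Fin J, (fun ω => ((D n).indicator (d j) ω) * (P i ω * P j ω)) := by
        funext ω
        simp
      rw [hfun]
      have hsum := condExp_finset_sum (s := Finset.univ)
        (f := fun j ω => ((D n).indicator (d j) ω) * (P i ω * P j ω))
        (fun j _ => cint j) (m := mV)
      refine hsum.trans ?_
      have hall : ∀ᵐ ω ∂μ, ∀ j : Fin J,
          (μ[fun ω => ((D n).indicator (d j) ω) * (P i ω * P j ω)|mV]) ω
          = ((D n).indicator (d j) ω) * (μ[fun ω' => P i ω' * P j ω'|mV]) ω :=
        ae_all_iff.mpr fun j => c4 j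
      filter_upwards [hall] with ω hω
      simp only [Finset.sum_apply]
      exact Finset.sum_congr rfl fun j _ => hω j
    filter_upwards [c2.symm.trans c5] with ω hω
    simpa using hω.symm
  -- conclusion
  have keyall : ∀ᵐ ω ∂μ, ∀ (i : Fin J) (n : ℕ),
      ∑ j, (D n).indicator (d j) ω * (μ[fun ω' => P i ω' * P j ω'|mV]) ω = 0 :=
    ae_all_iff.mpr fun i => ae_all_iff.mpr fun n => key2 i n
  filter_upwards [keyall, hnonsing] with ω h1 h2
  obtain ⟨n, hn⟩ := exists_nat_ge (∑ j, |d j ω|)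
  have hmem : ω ∈ D n := by
    intro j
    have := Finset.single_le_sum (f := fun j => |d j ω|)
      (fun k _ => abs_nonneg _) (Finset.mem_univ j)
    have s0 : (0:ℝ) ≤ ∑ j, |d j ω| := Finset.sum_nonneg fun j _ => abs_nonneg _
    linarith
  have hvec : (Matrix.of fun i j =>
      (μ[fun ω' => P i ω' * P j ω'|mV]) ω).mulVec (fun j => d j ω) = 0 := by
    funext i
    have hi := h1 i n
    simp only [Set.indicator_of_mem hmem] at hi
    simp only [Matrix.mulVec, dotProduct, Matrix.of_apply, Pi.zero_apply]
    rw [← hi]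
    exact Finset.sum_congr rfl fun j _ => by ring
  have hd0 : (fun j => d j ω) = 0 := mulVec_eq_zero_of_isUnit h2 hvec
  funext j
  have hj := congrFun hd0 j
  rw [hd_def] at hj
  simpa [sub_eq_zero] using hj

/-- identification of the coefficient function q₀(V) in the heterogeneous
coefficients model Y = p(X)'ε when E[p(X)p(X)' | V] is a.s. nonsingular. -/
theorem stmt9 {Ω 𝒳 𝒱 : Type*} [MeasurableSpace Ω] [MeasurableSpace 𝒳] [MeasurableSpace 𝒱]
    (μ : Measure Ω) [IsProbabilityMeasure μ] {J : ℕ}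
    (X : Ω → 𝒳) (V : Ω → 𝒱) (hX : Measurable X) (hV : Measurable V)
    (p : 𝒳 → Fin J → ℝ) (hp : ∀ j, Measurable fun x => p x j)
    (ε : Ω → Fin J → ℝ) (hε : ∀ j, Integrable (fun ω => ε ω j) μ)
    (Y : Ω → ℝ) (hYdef : ∀ ω, Y ω = ∑ j, p (X ω) j * ε ω j)
    (hY2 : Integrable (fun ω => (Y ω) ^ 2) μ)
    (hp2 : Integrable (fun ω => ∑ j, (p (X ω) j) ^ 2) μ)
    (q₀ : 𝒱 → Fin J → ℝ) (hq₀ : ∀ j, Measurable fun v => q₀ v j)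
    (hce : ∀ j,
      (μ[fun ω => ε ω j|MeasurableSpace.comap (fun ω => (X ω, V ω)) inferInstance])
        =ᵐ[μ] fun ω => q₀ (V ω) j)
    (hnonsing : ∀ᵐ ω ∂μ,
      IsUnit (Matrix.of fun i j =>
        (μ[fun ω' => p (X ω') i * p (X ω') j|MeasurableSpace.comap V inferInstance]) ω)) :
    ∀ qt : 𝒱 → Fin J → ℝ, (∀ j, Measurable fun v => qt v j) →
      ((μ[Y|MeasurableSpace.comap (fun ω => (X ω, V ω)) inferInstance])
        =ᵐ[μ] fun ω => ∑ j, p (X ω) j * qt (V ω) j) →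
      ∀ᵐ ω ∂μ, qt (V ω) = q₀ (V ω) := by
  intro qt hqt hYc
  have hXV : Measurable fun ω => (X ω, V ω) := hX.prodMk hV
  have hm : MeasurableSpace.comap (fun ω => (X ω, V ω)) inferInstance
      ≤ ‹MeasurableSpace Ω› := hXV.comap_le
  have hmVle : MeasurableSpace.comap V inferInstance ≤ ‹MeasurableSpace Ω› := hV.comap_le
  have hmVm : MeasurableSpace.comap V inferInstance
      ≤ MeasurableSpace.comap (fun ω => (X ω, V ω)) inferInstance := by
    have : MeasurableSpace.comap V (inferInstance : MeasurableSpace 𝒱)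
        = MeasurableSpace.comap (fun ω => (X ω, V ω))
            (MeasurableSpace.comap Prod.snd inferInstance) := by
      rw [MeasurableSpace.comap_comp]
      rfl
    rw [this]
    exact MeasurableSpace.comap_mono measurable_snd.comap_le
  have hPm : ∀ i : Fin J, Measurable[MeasurableSpace.comap (fun ω => (X ω, V ω)) inferInstance]
      (fun ω => p (X ω) i) := fun i =>
    meas_comap' (fun ω => (X ω, V ω)) (g := fun xv => p xv.1 i) ((hp i).comp measurable_fst)
  have hQ0m : ∀ j : Fin J, Measurable[MeasurableSpace.comap V inferInstance]
      (fun ω => q₀ (V ω) j) := fun j => meas_comap' V (g := fun v => q₀ v j) (hq₀ j)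
  have hQtm : ∀ j : Fin J, Measurable[MeasurableSpace.comap V inferInstance]
      (fun ω => qt (V ω) j) := fun j => meas_comap' V (g := fun v => qt v j) (hqt j)
  have := stmt9_aux μ hm hmVle (fun i ω => p (X ω) i) hPm ε hε Y hYdef hY2 hp2
    (fun j ω => q₀ (V ω) j) (fun j ω => qt (V ω) j) hQ0m hQtm hmVm hce hnonsing hYc
  filter_upwards [this] with ω hω
  funext j
  exact congrFun hω j
end

section
/- Let (X,V) be random variables and p : 𝒳 → ℝ^J, q : 𝒱 → ℝ^K measurable with E[(p(X)⊗q(V))(p(X)⊗q(V))'] finite. Suppose the joint distribution of (X,V) dominates a product probability measure μ×ρ (i.e., P_{(X,V)} ≥ c·(μ×ρ) for some c > 0) such that ∫ p p' dμ and ∫ q q' dρ are positive definite. Then E[(p(X)⊗q(V))(p(X)⊗q(V))'] is positive definite. -/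
open MeasureTheory Matrix
open scoped ENNReal Kronecker

/-- Kronecker product of positive definite real matrices is positive definite. -/
lemma kron_posDef {m n : Type*} [Fintype m] [Fintype n] [DecidableEq m] [DecidableEq n]
    {A : Matrix m m ℝ} {B : Matrix n n ℝ} (hA : A.PosDef) (hB : B.PosDef) :
    (A ⊗ₖ B).PosDef := by
  exact hA.kronecker hB

/-- Integrability of pairwise products from integrability of the sum of squares. -/
lemma integrable_mul_of_sq_sum {α : Type*} [MeasurableSpace α] {ν : Measure α} {n : ℕ}
    {p : α → Fin n → ℝ} (hp : ∀ j, Measurable fun x => p x j)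
    (h : Integrable (fun x => ∑ j, (p x j) ^ 2) ν) (i j : Fin n) :
    Integrable (fun x => p x i * p x j) ν := by
  refine h.mono ((hp i).mul (hp j)).aestronglyMeasurable (ae_of_all _ fun x => ?_)
  have hi : p x i ^ 2 ≤ ∑ k, p x k ^ 2 :=
    Finset.single_le_sum (fun k _ => sq_nonneg (p x k)) (Finset.mem_univ i)
  have hj : p x j ^ 2 ≤ ∑ k, p x k ^ 2 :=
    Finset.single_le_sum (fun k _ => sq_nonneg (p x k)) (Finset.mem_univ j)
  have hsum : (0:ℝ) ≤ ∑ k, p x k ^ 2 := Finset.sum_nonneg fun k _ => sq_nonneg _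
  rw [Real.norm_eq_abs, Real.norm_eq_abs, abs_of_nonneg hsum, abs_mul]
  nlinarith [sq_nonneg (|p x i| - |p x j|), sq_abs (p x i), sq_abs (p x j),
    abs_nonneg (p x i), abs_nonneg (p x j)]

/-- domination of the joint law of (X,V) by a product measure with positive
definite marginal second-moment matrices implies E[(p⊗q)(p⊗q)'] is positive definite. -/
theorem stmt12 {Ω 𝒳 𝒱 : Type*} [MeasurableSpace Ω] [MeasurableSpace 𝒳] [MeasurableSpace 𝒱]
    (P : Measure Ω) [IsProbabilityMeasure P] {J K : ℕ}
    (X : Ω → 𝒳) (V : Ω → 𝒱) (hX : Measurable X) (hV : Measurable V)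
    (p : 𝒳 → Fin J → ℝ) (q : 𝒱 → Fin K → ℝ)
    (hp : ∀ j, Measurable fun x => p x j) (hq : ∀ k, Measurable fun v => q v k)
    (hint : ∀ a b : Fin J × Fin K,
      Integrable (fun ω => (p (X ω) a.1 * q (V ω) a.2) * (p (X ω) b.1 * q (V ω) b.2)) P)
    (μ : Measure 𝒳) (ρ : Measure 𝒱) [IsProbabilityMeasure μ] [IsProbabilityMeasure ρ]
    (hpμ : Integrable (fun x => ∑ j, (p x j) ^ 2) μ)
    (hqρ : Integrable (fun v => ∑ k, (q v k) ^ 2) ρ)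
    (c : ℝ≥0∞) (hc : 0 < c)
    (hdom : c • (μ.prod ρ) ≤ P.map fun ω => (X ω, V ω))
    (hμPD : (Matrix.of fun i j => ∫ x, p x i * p x j ∂μ).PosDef)
    (hρPD : (Matrix.of fun k l => ∫ v, q v k * q v l ∂ρ).PosDef) :
    (Matrix.of fun a b : Fin J × Fin K =>
      ∫ ω, (p (X ω) a.1 * q (V ω) a.2) * (p (X ω) b.1 * q (V ω) b.2) ∂P).PosDef := by
  rw [posDef_iff_dotProduct_mulVec]
  refine ⟨?_, fun x hx => ?_⟩
  · ext a b
    simp only [conjTranspose_apply, of_apply, star_trivial]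
    exact integral_congr_ae (ae_of_all _ fun ω => by ring)
  · -- notation
    have hstar : star x = x := funext fun a => star_trivial _
    rw [hstar]
    set g : Fin J × Fin K → Ω → ℝ := fun a ω => p (X ω) a.1 * q (V ω) a.2 with hgdef
    -- quadratic form over P
    have hexp : ∀ ω, (∑ a, x a * g a ω) ^ 2 = ∑ a, ∑ b, x a * x b * (g a ω * g b ω) := by
      intro ω
      rw [sq, Finset.sum_mul_sum]
      exact Finset.sum_congr rfl fun a _ => Finset.sum_congr rfl fun b _ => by ring
    have hint2 : Integrable (fun ω => (∑ a, x a * g a ω) ^ 2) P := by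
      have : (fun ω => (∑ a, x a * g a ω) ^ 2)
          = fun ω => ∑ a, ∑ b, x a * x b * (g a ω * g b ω) := funext hexp
      rw [this]
      exact integrable_finset_sum _ fun a _ =>
        integrable_finset_sum _ fun b _ => (hint a b).const_mul _
    have hRHS : ∫ ω, (∑ a, x a * g a ω) ^ 2 ∂P
        = ∑ a, ∑ b, x a * x b * ∫ ω, g a ω * g b ω ∂P := by
      have h1 : (fun ω => (∑ a, x a * g a ω) ^ 2)
          = fun ω => ∑ a, ∑ b, x a * x b * (g a ω * g b ω) := funext hexp
      rw [h1, integral_finset_sum _ fun a _ =>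
        integrable_finset_sum _ fun b _ => (hint a b).const_mul _]
      refine Finset.sum_congr rfl fun a _ => ?_
      rw [integral_finset_sum _ fun b _ => (hint a b).const_mul _]
      exact Finset.sum_congr rfl fun b _ => integral_const_mul _ _
    have hQF : x ⬝ᵥ (Matrix.of fun a b : Fin J × Fin K =>
        ∫ ω, (p (X ω) a.1 * q (V ω) a.2) * (p (X ω) b.1 * q (V ω) b.2) ∂P) *ᵥ x
        = ∑ a, ∑ b, x a * x b * ∫ ω, g a ω * g b ω ∂P := by
      simp only [dotProduct, mulVec, of_apply, Finset.mul_sum]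
      exact Finset.sum_congr rfl fun a _ => Finset.sum_congr rfl fun b _ => by
        simp only [hgdef]; ring
    rw [hQF, ← hRHS]
    -- pushforward
    set T : Ω → 𝒳 × 𝒱 := fun ω => (X ω, V ω) with hTdef
    have hTm : Measurable T := hX.prodMk hV
    set F : 𝒳 × 𝒱 → ℝ := fun z => (∑ a : Fin J × Fin K, x a * (p z.1 a.1 * q z.2 a.2)) ^ 2
      with hFdef
    have hFm : Measurable F := by
      apply Measurable.pow_const
      exact Finset.measurable_sum _ fun a _ =>
        (((hp a.1).comp measurable_fst).mul ((hq a.2).comp measurable_snd)).const_mul _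
    have hcomp : ∀ ω, F (T ω) = (∑ a, x a * g a ω) ^ 2 := fun ω => rfl
    have hFint_map : Integrable F (P.map T) := by
      rw [integrable_map_measure hFm.aestronglyMeasurable hTm.aemeasurable]
      exact hint2.congr (ae_of_all _ fun ω => (hcomp ω).symm)
    have hmap_eq : ∫ z, F z ∂(P.map T) = ∫ ω, (∑ a, x a * g a ω) ^ 2 ∂P := by
      rw [integral_map hTm.aemeasurable hFm.aestronglyMeasurable]
    -- constant
    have hcle : c ≤ 1 := by
      have h1 := Measure.le_iff'.mp hdom Set.univ
      simp only [Measure.smul_apply, smul_eq_mul, measure_univ, mul_one] at h1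
      have h2 : (P.map T) Set.univ = 1 := by
        have : IsProbabilityMeasure (P.map T) := Measure.isProbabilityMeasure_map hTm.aemeasurable
        exact measure_univ
      rw [h2] at h1
      exact h1
    have hcR : 0 < c.toReal :=
      ENNReal.toReal_pos hc.ne' (ne_top_of_le_ne_top ENNReal.one_ne_top hcle)
    -- product side integrands
    have hppμ : ∀ i j, Integrable (fun y => p y i * p y j) μ :=
      integrable_mul_of_sq_sum hp hpμ
    have hqqρ : ∀ k l, Integrable (fun v => q v k * q v l) ρ :=
      integrable_mul_of_sq_sum hq hqρ
    have hprod_each : ∀ a b : Fin J × Fin K, Integrable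
        (fun z : 𝒳 × 𝒱 => x a * x b * ((p z.1 a.1 * p z.1 b.1) * (q z.2 a.2 * q z.2 b.2)))
        (μ.prod ρ) :=
      fun a b => ((hppμ a.1 b.1).mul_prod (hqqρ a.2 b.2)).const_mul _
    have hFsplit : F = fun z => ∑ a, ∑ b,
        x a * x b * ((p z.1 a.1 * p z.1 b.1) * (q z.2 a.2 * q z.2 b.2)) := by
      funext z
      simp only [hFdef]
      rw [sq, Finset.sum_mul_sum]
      exact Finset.sum_congr rfl fun a _ => Finset.sum_congr rfl fun b _ => by ring
    have hprodint : ∫ z, F z ∂(μ.prod ρ) = ∑ a, ∑ b, x a * x b *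
        ((∫ y, p y a.1 * p y b.1 ∂μ) * (∫ v, q v a.2 * q v b.2 ∂ρ)) := by
      rw [hFsplit, integral_finset_sum _ fun a _ =>
        integrable_finset_sum _ fun b _ => hprod_each a b]
      refine Finset.sum_congr rfl fun a _ => ?_
      rw [integral_finset_sum _ fun b _ => hprod_each a b]
      refine Finset.sum_congr rfl fun b _ => ?_
      rw [integral_const_mul]
      congr 1
      exact integral_prod_mul (fun y => p y a.1 * p y b.1) (fun v => q v a.2 * q v b.2)
    -- kronecker positivity
    have hK : ((Matrix.of fun i j => ∫ y, p y i * p y j ∂μ) ⊗ₖ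
        (Matrix.of fun k l => ∫ v, q v k * q v l ∂ρ)).PosDef := kron_posDef hμPD hρPD
    have hKQ : x ⬝ᵥ ((Matrix.of fun i j => ∫ y, p y i * p y j ∂μ) ⊗ₖ
        (Matrix.of fun k l => ∫ v, q v k * q v l ∂ρ)) *ᵥ x
        = ∑ a, ∑ b, x a * x b *
          ((∫ y, p y a.1 * p y b.1 ∂μ) * (∫ v, q v a.2 * q v b.2 ∂ρ)) := by
      simp only [dotProduct, mulVec, kroneckerMap_apply, of_apply, Finset.mul_sum]
      exact Finset.sum_congr rfl fun a _ => Finset.sum_congr rfl fun b _ => by ring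
    have hKpos : 0 < ∫ z, F z ∂(μ.prod ρ) := by
      rw [hprodint, ← hKQ]
      have := (posDef_iff_dotProduct_mulVec.mp hK).2 hx
      rwa [hstar] at this
    -- put it together
    have hmono : ∫ z, F z ∂(c • μ.prod ρ) ≤ ∫ z, F z ∂(P.map T) :=
      integral_mono_measure hdom (ae_of_all _ fun z => sq_nonneg _) hFint_map
    have hsmul : ∫ z, F z ∂(c • μ.prod ρ) = c.toReal * ∫ z, F z ∂(μ.prod ρ) := by
      rw [integral_smul_measure, smul_eq_mul]
    calc (0:ℝ) < c.toReal * ∫ z, F z ∂(μ.prod ρ) := mul_pos hcR hKpos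
      _ = ∫ z, F z ∂(c • μ.prod ρ) := hsmul.symm
      _ ≤ ∫ z, F z ∂(P.map T) := hmono
      _ = ∫ ω, (∑ a, x a * g a ω) ^ 2 ∂P := hmap_eq
end
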